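/- For all real $Z \le 0$, the standard normal cdf satisfies the lower bound $\Phi(Z) \ge \frac{2\phi(Z)}{\sqrt{4 + Z^2} - Z}$, where $\phi$ is the standard normal density. -/

import Mathlib

open Real Set

/-- Standard normal pdf. -/
noncomputable def gaussPdf (x : ℝ) : ℝ := (Real.sqrt (2 * Real.pi))⁻¹ * Real.exp (-x ^ 2 / 2)

/-- Standard normal cdf. -/
noncomputable def gaussCdf (x : ℝ) : ℝ := ∫ t in Set.Iic x, gaussPdf t

lemma gaussPdf_pos (x : ℝ) : 0 < gaussPdf x := by
  unfold gaussPdf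
  positivity

lemma gaussPdf_continuous : Continuous gaussPdf := by
  unfold gaussPdf
  fun_prop

lemma gaussPdf_integrable : MeasureTheory.Integrable gaussPdf := by
  have h : MeasureTheory.Integrable (fun x : ℝ => Real.exp (-(1/2 : ℝ) * x ^ 2)) :=
    integrable_exp_neg_mul_sq (by norm_num)
  have h2 := h.const_mul (Real.sqrt (2 * Real.pi))⁻¹
  refine h2.congr (MeasureTheory.ae_of_all _ fun x => ?_)
  unfold gaussPdf
  ring_nf

lemma hasDerivAt_gaussCdf (y : ℝ) : HasDerivAt gaussCdf (gaussPdf y) y := by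
  have key : ∀ x : ℝ, gaussCdf x = gaussCdf 0 + ∫ t in (0:ℝ)..x, gaussPdf t := by
    intro x
    have := intervalIntegral.integral_Iic_sub_Iic
      (gaussPdf_integrable.integrableOn (s := Iic (0:ℝ)))
      (gaussPdf_integrable.integrableOn (s := Iic x))
    unfold gaussCdf
    linarith [this]
  have hD : HasDerivAt (fun x => gaussCdf 0 + ∫ t in (0:ℝ)..x, gaussPdf t) (gaussPdf y) y := by
    refine (HasDerivAt.const_add _ ?_)
    exact intervalIntegral.integral_hasDerivAt_right
      (gaussPdf_integrable.intervalIntegrable)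
      (gaussPdf_continuous.stronglyMeasurableAtFilter _ _)
      gaussPdf_continuous.continuousAt
  exact hD.congr_of_eventuallyEq (Filter.Eventually.of_forall fun x => (key x))

lemma hasDerivAt_gaussPdf (y : ℝ) : HasDerivAt gaussPdf (-y * gaussPdf y) y := by
  have h1 : HasDerivAt (fun x : ℝ => -x ^ 2 / 2) (-y) y := by
    have := ((hasDerivAt_pow 2 y).neg).div_const 2
    simpa using this.congr_deriv (by ring)
  have h2 := (h1.exp).const_mul (Real.sqrt (2 * Real.pi))⁻¹
  unfold gaussPdf
  exact h2.congr_deriv (by ring)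

theorem mills_lower_bound (Z : ℝ) (hZ : Z ≤ 0) :
    gaussCdf Z ≥ 2 * gaussPdf Z / (Real.sqrt (4 + Z ^ 2) - Z) := by
  -- abbreviations
  set G : ℝ → ℝ := fun y => gaussCdf y - gaussPdf y * ((Real.sqrt (4 + y ^ 2) + y) / 2) with hG
  -- basic facts about s = sqrt (4 + y^2)
  have hs_sq : ∀ y : ℝ, (Real.sqrt (4 + y ^ 2)) ^ 2 = 4 + y ^ 2 := fun y =>
    Real.sq_sqrt (by positivity)
  have hs_pos : ∀ y : ℝ, 0 < Real.sqrt (4 + y ^ 2) := fun y =>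
    Real.sqrt_pos.mpr (by positivity)
  -- derivative of G
  have hGderiv : ∀ y : ℝ, HasDerivAt G
      (gaussPdf y * (1 + y * ((Real.sqrt (4 + y ^ 2) + y) / 2)
        - (y / Real.sqrt (4 + y ^ 2) + 1) / 2)) y := by
    intro y
    have hsqrt : HasDerivAt (fun x : ℝ => Real.sqrt (4 + x ^ 2))
        ((2 * y) / (2 * Real.sqrt (4 + y ^ 2))) y := by
      have hf : HasDerivAt (fun x : ℝ => 4 + x ^ 2) (2 * y) y := by
        simpa using (hasDerivAt_pow 2 y).const_add 4
      exact hf.sqrt (by positivity)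
    have h2 : HasDerivAt (fun x : ℝ => (Real.sqrt (4 + x ^ 2) + x) / 2)
        (((2 * y) / (2 * Real.sqrt (4 + y ^ 2)) + 1) / 2) y :=
      ((hsqrt.add (hasDerivAt_id y)).div_const 2)
    have h3 := (hasDerivAt_gaussCdf y).sub ((hasDerivAt_gaussPdf y).mul h2)
    have hs := (hs_pos y).ne'
    refine h3.congr_deriv ?_
    field_simp
    ring
  -- the derivative is nonnegative everywhere
  have hderiv_nonneg : ∀ y : ℝ, 0 ≤ gaussPdf y * (1 + y * ((Real.sqrt (4 + y ^ 2) + y) / 2)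
        - (y / Real.sqrt (4 + y ^ 2) + 1) / 2) := by
    intro y
    set s := Real.sqrt (4 + y ^ 2) with hsdef
    have h1 : s ^ 2 = 4 + y ^ 2 := hs_sq y
    have h2 : 0 < s := hs_pos y
    have key : 0 ≤ s * (1 + y ^ 2) + y * (3 + y ^ 2) := by
      rcases le_or_gt 0 y with hy | hy
      · positivity
      · have hA : 0 ≤ s * (1 + y ^ 2) - y * (3 + y ^ 2) := by nlinarith
        have hprod : (s * (1 + y ^ 2) + y * (3 + y ^ 2)) *
            (s * (1 + y ^ 2) - y * (3 + y ^ 2)) = 4 := by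
          linear_combination (1 + y ^ 2) ^ 2 * h1
        nlinarith
    have hexpr : 0 ≤ 1 + y * ((s + y) / 2) - (y / s + 1) / 2 := by
      have : 1 + y * ((s + y) / 2) - (y / s + 1) / 2
          = (s * (1 + y ^ 2) + y * (3 + y ^ 2)) / (2 * s) := by
        field_simp
        linear_combination y * h1
      rw [this]
      positivity
    exact mul_nonneg (gaussPdf_pos y).le hexpr
  -- G is monotone
  have hmono : Monotone G := by
    apply monotone_of_deriv_nonneg
    · exact fun y => (hGderiv y).differentiableAt
    · intro y
      rw [(hGderiv y).deriv]
      exact hderiv_nonneg y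
  -- lower bound for G at very negative points
  have hGlb : ∀ W : ℝ, W ≤ 0 → -gaussPdf W ≤ G W := by
    intro W hW
    have hcdf : 0 ≤ gaussCdf W := by
      apply MeasureTheory.setIntegral_nonneg measurableSet_Iic
      exact fun t _ => (gaussPdf_pos t).le
    have hsle : Real.sqrt (4 + W ^ 2) ≤ 2 - W := by
      rw [show (2 - W) = Real.sqrt ((2 - W) ^ 2) from
        (Real.sqrt_sq (by linarith)).symm]
      apply Real.sqrt_le_sqrt
      nlinarith
    have hfac : (Real.sqrt (4 + W ^ 2) + W) / 2 ≤ 1 := by linarith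
    have hfac0 : 0 ≤ (Real.sqrt (4 + W ^ 2) + W) / 2 := by
      have : -W ≤ Real.sqrt (4 + W ^ 2) := by
        rw [show (-W) = Real.sqrt ((-W) ^ 2) from
          (Real.sqrt_sq (by linarith)).symm]
        apply Real.sqrt_le_sqrt
        nlinarith
      linarith
    have : gaussPdf W * ((Real.sqrt (4 + W ^ 2) + W) / 2) ≤ gaussPdf W * 1 :=
      mul_le_mul_of_nonneg_left hfac (gaussPdf_pos W).le
    simp only [hG]
    nlinarith [gaussPdf_pos W]
  -- -gaussPdf tends to 0 at -∞
  have htend : Filter.Tendsto (fun W : ℝ => -gaussPdf W) Filter.atBot (nhds 0) := by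
    have h1 : Filter.Tendsto (fun W : ℝ => -W ^ 2 / 2) Filter.atBot Filter.atBot := by
      refine Filter.tendsto_atBot_mono' Filter.atBot ?_ Filter.tendsto_id
      filter_upwards [Filter.eventually_le_atBot (-2 : ℝ)] with W hW
      show -W ^ 2 / 2 ≤ W
      nlinarith
    have h2 : Filter.Tendsto (fun W : ℝ => gaussPdf W) Filter.atBot (nhds 0) := by
      have := (Real.tendsto_exp_atBot.comp h1).const_mul (Real.sqrt (2 * Real.pi))⁻¹
      simpa [gaussPdf, Function.comp] using this
    simpa using h2.neg
  -- conclude 0 ≤ G Z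
  have hGZ : 0 ≤ G Z := by
    refine le_of_tendsto htend ?_
    filter_upwards [Filter.eventually_le_atBot Z] with W hW
    exact le_trans (hGlb W (hW.trans hZ)) (hmono hW)
  -- convert to the stated form
  have hspos : 0 < Real.sqrt (4 + Z ^ 2) - Z := by
    have := hs_pos Z
    linarith
  have heq : 2 * gaussPdf Z / (Real.sqrt (4 + Z ^ 2) - Z)
      = gaussPdf Z * ((Real.sqrt (4 + Z ^ 2) + Z) / 2) := by
    rw [div_eq_iff hspos.ne']
    have := hs_sq Z
    nlinarith [gaussPdf_pos Z]
  rw [ge_iff_le, heq]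
  simp only [hG] at hGZ
  linarith
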